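/- A weak ordering ≾ on a finite set X is 2-quasilinear (there are no pairwise distinct a,b,c,d with a ≺ b ∼ c ∼ d) if and only if there exists a total ordering ≤ on X for which ≾ is single-plateaued, i.e., for all a < b < c one has b ≺ a or b ≺ c or a ∼ b ∼ c. -/

import Mathlib

/-- Strict part of a weak ordering `R`. -/
def SLT {X : Type*} (R : X → X → Prop) (x y : X) : Prop := R x y ∧ ¬ R y x

/-- Symmetric part of a weak ordering `R`. -/
def SIM {X : Type*} (R : X → X → Prop) (x y : X) : Prop := R x y ∧ R y x

/-- A weak ordering is 2-quasilinear if there are no pairwise distinct `a,b,c,d`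
with `a ≺ b ∼ c ∼ d`. -/
def TwoQuasilinear {X : Type*} (R : X → X → Prop) : Prop :=
  ¬ ∃ a b c d : X, (a ≠ b ∧ a ≠ c ∧ a ≠ d ∧ b ≠ c ∧ b ≠ d ∧ c ≠ d) ∧
      SLT R a b ∧ SIM R b c ∧ SIM R c d

/-- `R` is single-plateaued for the total ordering `le`. -/
def SinglePlateaued {X : Type*} (R : X → X → Prop) (le : X → X → Prop) : Prop :=
  ∀ a b c : X, (le a b ∧ a ≠ b) → (le b c ∧ b ≠ c) →
    SLT R b a ∨ SLT R b c ∨ (SIM R a b ∧ SIM R b c)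

section Aux

variable {X : Type*} {R : X → X → Prop}

lemma sim_symm {x y : X} (h : SIM R x y) : SIM R y x := ⟨h.2, h.1⟩

lemma sim_trans (htrans : Transitive R) {x y z : X} (h1 : SIM R x y) (h2 : SIM R y z) :
    SIM R x z := ⟨htrans h1.1 h2.1, htrans h2.2 h1.2⟩

lemma slt_sim (htrans : Transitive R) {x y z : X} (h1 : SLT R x y) (h2 : SIM R y z) :
    SLT R x z :=
  ⟨htrans h1.1 h2.1, fun hc => h1.2 (htrans h2.1 hc)⟩

lemma trichot (htot : ∀ x y : X, R x y ∨ R y x) (x y : X) :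
    SLT R x y ∨ SIM R x y ∨ SLT R y x := by
  rcases htot x y with h | h
  · by_cases h2 : R y x
    · exact Or.inr (Or.inl ⟨h, h2⟩)
    · exact Or.inl ⟨h, h2⟩
  · by_cases h2 : R x y
    · exact Or.inr (Or.inl ⟨h2, h⟩)
    · exact Or.inr (Or.inr ⟨h, h2⟩)

/-- number of elements strictly below `x`. -/
noncomputable def rho (R : X → X → Prop) (x : X) : ℕ := Set.ncard {y | SLT R y x}

lemma rho_lt [Finite X] (htrans : Transitive R) {x y : X} (h : SLT R x y) :
    rho R x < rho R y := by
  apply Set.ncard_lt_ncard _ (Set.toFinite _)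
  rw [Set.ssubset_def]
  constructor
  · intro z hz
    exact ⟨htrans hz.1 h.1, fun hc => h.2 (htrans hc hz.1)⟩
  · intro hsub
    have : SLT R x x := hsub h
    exact this.2 this.1

lemma rho_eq_of_sim (htrans : Transitive R) {x y : X} (h : SIM R x y) :
    rho R x = rho R y := by
  unfold rho
  congr 1
  ext z
  exact ⟨fun hz => slt_sim htrans hz h, fun hz => slt_sim htrans hz (sim_symm h)⟩

lemma sim_of_rho [Finite X] (htot : ∀ x y : X, R x y ∨ R y x) (htrans : Transitive R)
    {x y : X} (h : rho R x = rho R y) : SIM R x y := by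
  rcases trichot htot x y with h1 | h1 | h1
  · exact absurd (rho_lt htrans h1) (by omega)
  · exact h1
  · exact absurd (rho_lt htrans h1) (by omega)

lemma slt_of_rho [Finite X] (htot : ∀ x y : X, R x y ∨ R y x) (htrans : Transitive R)
    {x y : X} (h : rho R x < rho R y) : SLT R x y := by
  rcases trichot htot x y with h1 | h1 | h1
  · exact h1
  · exact absurd (rho_eq_of_sim htrans h1) (by omega)
  · exact absurd (rho_lt htrans h1) (by omega)

lemma exists_slt_of_rho_pos {x : X} (h : rho R x ≠ 0) : ∃ z, SLT R z x := by
  obtain ⟨z, hz⟩ := Set.nonempty_of_ncard_ne_zero h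
  exact ⟨z, hz⟩

end Aux

theorem stmt_13 {X : Type*} [Finite X] (R : X → X → Prop)
    (htot : ∀ x y : X, R x y ∨ R y x) (htrans : Transitive R) :
    TwoQuasilinear R ↔
      ∃ le : X → X → Prop, IsLinearOrder X le ∧ SinglePlateaued R le := by
  constructor
  · -- forward: construct the linear order
    intro hql
    classical
    obtain ⟨n, ⟨eqv⟩⟩ := Finite.exists_equiv_fin X
    set ε : X → ℕ := fun x => (eqv x : ℕ) with hεdef
    have hεinj : Function.Injective ε := fun x y h => eqv.injective (Fin.ext h)
    set key : X → ℤ := fun x =>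
      if rho R x = 0 then 0
      else if ∃ y, y ≠ x ∧ SIM R x y ∧ ε y < ε x then (rho R x : ℤ)
      else -(rho R x : ℤ) with hkeydef
    -- basic facts about key
    have hzero : ∀ x, key x = 0 ↔ rho R x = 0 := by
      intro x
      simp only [hkeydef]
      split_ifs with h1 h2 <;> simp [h1]
    have hposval : ∀ x, 0 < key x → key x = (rho R x : ℤ) ∧
        ∃ y, y ≠ x ∧ SIM R x y ∧ ε y < ε x := by
      intro x hx
      simp only [hkeydef] at hx ⊢
      split_ifs at hx ⊢ with h1 h2
      · omega
      · exact ⟨rfl, h2⟩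
      · omega
    have hnegval : ∀ x, key x < 0 → key x = -(rho R x : ℤ) ∧
        ¬ ∃ y, y ≠ x ∧ SIM R x y ∧ ε y < ε x := by
      intro x hx
      simp only [hkeydef] at hx ⊢
      split_ifs at hx ⊢ with h1 h2
      · omega
      · omega
      · exact ⟨rfl, h2⟩
    have hρeq : ∀ x y, key x = key y → rho R x = rho R y := by
      intro x y hxy
      rcases lt_trichotomy (key x) 0 with hk | hk | hk
      · have h1 := (hnegval x hk).1
        have h2 := (hnegval y (hxy ▸ hk)).1
        omega
      · have h1 := (hzero x).1 hk
        have h2 := (hzero y).1 (hxy ▸ hk)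
        omega
      · have h1 := (hposval x hk).1
        have h2 := (hposval y (hxy ▸ hk)).1
        omega
    -- no 3 distinct mutually similar elements in a non-bottom class
    have htriple : ∀ x w y : X, x ≠ w → x ≠ y → w ≠ y → SIM R x w → SIM R x y →
        rho R x ≠ 0 → False := by
      intro x w y h1 h2 h3 s1 s2 hρ
      obtain ⟨z, hz⟩ := exists_slt_of_rho_pos hρ
      have hzx : z ≠ x := fun h => by subst h; exact hz.2 hz.1
      have hzw : z ≠ w := fun h => by subst h; exact hz.2 s1.1
      have hzy : z ≠ y := fun h => by subst h; exact hz.2 s2.1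
      exact hql ⟨z, x, w, y, ⟨hzx, hzw, hzy, h1, h2, h3⟩, hz, s1,
        sim_trans htrans (sim_symm s1) s2⟩
    -- key is injective on nonzero values
    have keyinj : ∀ x y, key x ≠ 0 → key x = key y → x = y := by
      intro x y hx0 hxy
      by_contra hne
      have hρ : rho R x = rho R y := hρeq x y hxy
      have hsim : SIM R x y := sim_of_rho htot htrans hρ
      have hρx : rho R x ≠ 0 := fun h => hx0 ((hzero x).2 h)
      rcases lt_trichotomy (key x) 0 with hk | hk | hk
      · have h1 := (hnegval x hk).2
        have h2 := (hnegval y (hxy ▸ hk)).2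
        rcases Nat.lt_trichotomy (ε x) (ε y) with h | h | h
        · exact h2 ⟨x, hne, sim_symm hsim, h⟩
        · exact hne (hεinj h)
        · exact h1 ⟨y, Ne.symm hne, hsim, h⟩
      · exact hx0 hk
      · obtain ⟨w, hwx, hsw, hεw⟩ := (hposval x hk).2
        obtain ⟨v, hvy, hsv, hεv⟩ := (hposval y (hxy ▸ hk)).2
        by_cases hwy : w = y
        · by_cases hvx : v = x
          · rw [hwy] at hεw; rw [hvx] at hεv; omega
          · exact htriple y v x (Ne.symm hvy) (Ne.symm hne) hvx hsv (sim_symm hsim) (by omega)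
        · exact htriple x w y (Ne.symm hwx) hne hwy hsw hsim hρx
    refine ⟨fun x y => key x < key y ∨ (key x = key y ∧ ε x ≤ ε y), ?_, ?_⟩
    · refine { refl := ?_, trans := ?_, antisymm := ?_, total := ?_ }
      · intro x; exact Or.inr ⟨rfl, le_refl _⟩
      · intro x y z hxy hyz
        rcases hxy with h | ⟨h1, h2⟩ <;> rcases hyz with h' | ⟨h1', h2'⟩
        · exact Or.inl (lt_trans h h')
        · exact Or.inl (h1' ▸ h)
        · exact Or.inl (h1 ▸ h')
        · exact Or.inr ⟨h1.trans h1', le_trans h2 h2'⟩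
      · intro x y hxy hyx
        rcases hxy with h | ⟨h1, h2⟩ <;> rcases hyx with h' | ⟨h1', h2'⟩
        · exact absurd h' (lt_asymm h)
        · exact absurd h (by omega)
        · exact absurd h' (by omega)
        · exact hεinj (le_antisymm h2 h2')
      · intro x y
        rcases lt_trichotomy (key x) (key y) with h | h | h
        · exact Or.inl (Or.inl h)
        · rcases Nat.le_total (ε x) (ε y) with h' | h'
          · exact Or.inl (Or.inr ⟨h, h'⟩)
          · exact Or.inr (Or.inr ⟨h.symm, h'⟩)
        · exact Or.inr (Or.inl h)
    · rintro a b c ⟨hab, nab⟩ ⟨hbc, nbc⟩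
      rcases lt_trichotomy (key b) 0 with hk | hk | hk
      · -- key b < 0 : show b ≺ a
        have hka : key a < key b := by
          rcases hab with h | ⟨h1, h2⟩
          · exact h
          · exact absurd (keyinj a b (by omega) h1) nab
        have hka' : key a < 0 := lt_trans hka hk
        have h1 := (hnegval a hka').1
        have h2 := (hnegval b hk).1
        exact Or.inl (slt_of_rho htot htrans (by omega))
      · -- key b = 0
        have hρb : rho R b = 0 := (hzero b).1 hk
        by_cases ha : rho R a = 0
        · by_cases hc : rho R c = 0
          · exact Or.inr (Or.inr ⟨sim_of_rho htot htrans (by omega),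
              sim_of_rho htot htrans (by omega)⟩)
          · exact Or.inr (Or.inl (slt_of_rho htot htrans (by omega)))
        · exact Or.inl (slt_of_rho htot htrans (by omega))
      · -- key b > 0 : show b ≺ c
        have hkc : key b < key c := by
          rcases hbc with h | ⟨h1, h2⟩
          · exact h
          · exact absurd (keyinj b c (by omega) h1) nbc
        have hkc' : 0 < key c := lt_trans hk hkc
        have h1 := (hposval b hk).1
        have h2 := (hposval c hkc').1
        exact Or.inr (Or.inl (slt_of_rho htot htrans (by omega)))
  · -- reverse direction
    rintro ⟨le, hlin, hsp⟩ ⟨a, b, c, d, ⟨hab, hac, had, hbc, hbd, hcd⟩, h1, h2, h3⟩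
    have htle : ∀ x y : X, le x y ∨ le y x := hlin.toTotal.total
    have sbd : SIM R b d := sim_trans htrans h2 h3
    have sac : SLT R a c := slt_sim htrans h1 h2
    have sad : SLT R a d := slt_sim htrans sac h3
    have hcon : ∀ x y z : X, le x y → x ≠ y → le y z → y ≠ z → a ≠ y →
        SIM R x y → SIM R y z → SLT R a y → False := by
      intro x y z hxy nxy hyz nyz nay sxy syz say
      rcases htle a y with h | h
      · rcases hsp a y z ⟨h, nay⟩ ⟨hyz, nyz⟩ with hc | hc | hc
        · exact say.2 hc.1
        · exact hc.2 syz.2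
        · exact say.2 hc.1.2
      · rcases hsp x y a ⟨hxy, nxy⟩ ⟨h, Ne.symm nay⟩ with hc | hc | hc
        · exact hc.2 sxy.1
        · exact say.2 hc.1
        · exact say.2 hc.2.1
    rcases htle b c with hbc' | hbc'
    · rcases htle c d with hcd' | hcd'
      · exact hcon b c d hbc' hbc hcd' hcd hac h2 h3 sac
      · rcases htle b d with hbd' | hbd'
        · exact hcon b d c hbd' hbd hcd' (Ne.symm hcd) had sbd (sim_symm h3) sad
        · exact hcon d b c hbd' (Ne.symm hbd) hbc' hbc hab (sim_symm sbd) h2 h1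
    · rcases htle b d with hbd' | hbd'
      · exact hcon c b d hbc' (Ne.symm hbc) hbd' hbd hab (sim_symm h2) sbd h1
      · rcases htle c d with hcd' | hcd'
        · exact hcon c d b hcd' hcd hbd' (Ne.symm hbd) had h3 (sim_symm sbd) sad
        · exact hcon d c b hcd' (Ne.symm hcd) hbc' (Ne.symm hbc) hac (sim_symm h3) (sim_symm h2) sac
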